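/- Let f : Finset V → ℝ be monotone, submodular, and satisfy f(∅) = 0, where V is a finite type. Let S* be a set of size k maximizing f among sets of size k, and let S_g be obtained by the greedy procedure that starts from ∅ and for k steps adds an element of maximum marginal gain. Then f(S_g) ≥ (1 − (1 − 1/k)^k) · f(S*) ≥ (1 − 1/e) · f(S*). -/

import Mathlib

lemma submod_decomp {V : Type*} [Fintype V] [DecidableEq V] (f : Finset V → ℝ)
    (hsub : ∀ S T : Finset V, S ⊆ T → ∀ v : V, v ∉ T →
      f (insert v T) - f T ≤ f (insert v S) - f S) :
    ∀ (A B : Finset V), f (A ∪ B) - f B ≤ ∑ v ∈ A \ B, (f (insert v B) - f B) := by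
  intro A
  induction A using Finset.induction with
  | empty => intro B; simp
  | @insert a A ha ih =>
    intro B
    by_cases hab : a ∈ B
    · have h1 : insert a A ∪ B = A ∪ B := by
        rw [Finset.insert_union, Finset.insert_eq_self.mpr (Finset.mem_union_right A hab)]
      have h2 : insert a A \ B = A \ B := by
        ext x
        simp only [Finset.mem_insert, Finset.mem_sdiff]
        constructor
        · rintro ⟨rfl | h, hb⟩
          · exact absurd hab hb
          · exact ⟨h, hb⟩
        · tauto
      rw [h1, h2]; exact ih B
    · have haAB : a ∉ A ∪ B := by
        simp only [Finset.mem_union, not_or]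
        exact ⟨ha, hab⟩
      have h1 : insert a A ∪ B = insert a (A ∪ B) := Finset.insert_union a A B
      have h2 : insert a A \ B = insert a (A \ B) := by
        ext x
        simp only [Finset.mem_insert, Finset.mem_sdiff]
        constructor
        · rintro ⟨rfl | h, hb⟩
          · exact Or.inl rfl
          · exact Or.inr ⟨h, hb⟩
        · rintro (rfl | ⟨h, hb⟩)
          · exact ⟨Or.inl rfl, hab⟩
          · exact ⟨Or.inr h, hb⟩
      have haA : a ∉ A \ B := fun h => ha (Finset.mem_sdiff.mp h).1
      rw [h1, h2, Finset.sum_insert haA]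
      have key := hsub B (A ∪ B) Finset.subset_union_right a haAB
      have hrec := ih B
      linarith

theorem stmt_10 {V : Type*} [Fintype V] [DecidableEq V] (f : Finset V → ℝ)
    (hmono : ∀ S T : Finset V, S ⊆ T → f S ≤ f T)
    (hsub : ∀ S T : Finset V, S ⊆ T → ∀ v : V, v ∉ T →
      f (insert v T) - f T ≤ f (insert v S) - f S)
    (hempty : f ∅ = 0)
    (k : ℕ)
    (Sopt : Finset V) (hopt_card : Sopt.card = k)
    (hopt : ∀ S : Finset V, S.card = k → f S ≤ f Sopt)
    (T : ℕ → Finset V) (hT0 : T 0 = ∅)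
    (hgreedy : ∀ t, t < k → ∃ v : V, v ∉ T t ∧ T (t + 1) = insert v (T t) ∧
      ∀ u : V, f (insert u (T t)) - f (T t) ≤ f (insert v (T t)) - f (T t)) :
    f (T k) ≥ (1 - (1 - 1 / (k : ℝ)) ^ k) * f Sopt ∧
      (1 - (1 - 1 / (k : ℝ)) ^ k) * f Sopt ≥ (1 - 1 / Real.exp 1) * f Sopt := by
  have hopt_nonneg : 0 ≤ f Sopt := by
    have := hmono ∅ Sopt (Finset.empty_subset _)
    linarith
  rcases Nat.eq_zero_or_pos k with hk0 | hkpos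
  · subst hk0
    have hS : Sopt = ∅ := Finset.card_eq_zero.mp hopt_card
    rw [hS, hempty]
    constructor
    · simp [hT0, hempty]
    · simp
  have hkR : (0:ℝ) < (k:ℝ) := by exact_mod_cast hkpos
  have hbase_nonneg : (0:ℝ) ≤ 1 - 1/(k:ℝ) := by
    have h1 : 1/(k:ℝ) ≤ 1 := by
      rw [div_le_one hkR]; exact_mod_cast hkpos
    linarith
  -- per-step contraction
  have step : ∀ t, t < k → f Sopt - f (T (t+1)) ≤ (1 - 1/(k:ℝ)) * (f Sopt - f (T t)) := by
    intro t ht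
    obtain ⟨v, hv, hT1, hmax⟩ := hgreedy t ht
    have hg0 : 0 ≤ f (T (t+1)) - f (T t) := by
      rw [hT1]
      have := hmono (T t) (insert v (T t)) (Finset.subset_insert _ _)
      linarith
    have hdecomp := submod_decomp f hsub Sopt (T t)
    have hsum : ∑ u ∈ Sopt \ T t, (f (insert u (T t)) - f (T t))
        ≤ ((Sopt \ T t).card : ℝ) * (f (T (t+1)) - f (T t)) := by
      rw [hT1]
      calc ∑ u ∈ Sopt \ T t, (f (insert u (T t)) - f (T t))
          ≤ ∑ _u ∈ Sopt \ T t, (f (insert v (T t)) - f (T t)) :=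
            Finset.sum_le_sum (fun u _ => hmax u)
        _ = ((Sopt \ T t).card : ℝ) * (f (insert v (T t)) - f (T t)) := by
            rw [Finset.sum_const, nsmul_eq_mul]
    have hcard : ((Sopt \ T t).card : ℝ) ≤ (k:ℝ) := by
      have : (Sopt \ T t).card ≤ k := hopt_card ▸ Finset.card_le_card Finset.sdiff_subset
      exact_mod_cast this
    have hmono' : f Sopt ≤ f (Sopt ∪ T t) := hmono _ _ Finset.subset_union_left
    have hkg : f Sopt - f (T t) ≤ (k:ℝ) * (f (T (t+1)) - f (T t)) := by
      have h2 : ((Sopt \ T t).card:ℝ) * (f (T (t+1)) - f (T t))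
          ≤ (k:ℝ) * (f (T (t+1)) - f (T t)) := mul_le_mul_of_nonneg_right hcard hg0
      linarith
    have hdiv : (f Sopt - f (T t)) / (k:ℝ) ≤ f (T (t+1)) - f (T t) := by
      rw [div_le_iff₀ hkR]; linarith [mul_comm (f (T (t+1)) - f (T t)) (k:ℝ)]
    have heq : (1 - 1/(k:ℝ)) * (f Sopt - f (T t))
        = (f Sopt - f (T t)) - (f Sopt - f (T t)) / (k:ℝ) := by
      field_simp
    linarith
  -- induction
  have main : ∀ t, t ≤ k → f Sopt - f (T t) ≤ (1 - 1/(k:ℝ))^t * f Sopt := by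
    intro t
    induction t with
    | zero => intro _; simp [hT0, hempty]
    | succ t ih =>
      intro ht
      have ht' : t < k := ht
      have h1 := step t ht'
      have h2 := ih (le_of_lt ht')
      calc f Sopt - f (T (t+1)) ≤ (1 - 1/(k:ℝ)) * (f Sopt - f (T t)) := h1
        _ ≤ (1 - 1/(k:ℝ)) * ((1 - 1/(k:ℝ))^t * f Sopt) :=
            mul_le_mul_of_nonneg_left h2 hbase_nonneg
        _ = (1 - 1/(k:ℝ))^(t+1) * f Sopt := by ring
  have hmain := main k le_rfl
  constructor
  · have : (1 - (1 - 1/(k:ℝ))^k) * f Sopt = f Sopt - (1 - 1/(k:ℝ))^k * f Sopt := by ring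
    linarith
  · have hbase : 1 - 1/(k:ℝ) ≤ Real.exp (-(1/(k:ℝ))) := by
      have := Real.add_one_le_exp (-(1/(k:ℝ)))
      linarith
    have hpow : (1 - 1/(k:ℝ))^k ≤ Real.exp (-(1/(k:ℝ)))^k :=
      pow_le_pow_left₀ hbase_nonneg hbase k
    have hexpk : Real.exp (-(1/(k:ℝ)))^k = Real.exp (-1) := by
      rw [← Real.exp_nat_mul]
      congr 1
      field_simp
    have hinv : Real.exp (-1) = 1 / Real.exp 1 := by
      rw [Real.exp_neg]; exact (one_div _).symm
    have hle : (1 - 1/(k:ℝ))^k ≤ 1 / Real.exp 1 := by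
      rw [← hinv, ← hexpk]; exact hpow
    have : 1 - 1 / Real.exp 1 ≤ 1 - (1 - 1/(k:ℝ))^k := by linarith
    exact mul_le_mul_of_nonneg_right this hopt_nonneg
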